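/- (Trek rule) Let G = (V,E) be a DAG, Λ ∈ ℝ^E, and ω ∈ (0,∞)^V. Define Σ = (I−Λ)^{-T} diag(ω) (I−Λ)^{-1}. Then for all i,j ∈ V, the entry Σ_{ij} equals the sum over all treks τ between i and j of the trek monomial ω_{i₀} ∏_{k→l ∈ τ} λ_{kl}, where i₀ is the top node of τ. -/

import Mathlib

open Matrix

/-- `p` is a directed path in `E` from `a` to `b`: the vertex sequence is `a :: p`,
consecutive vertices are joined by edges of `E`, and the last vertex is `b`. -/
def IsDirPath {V : Type*} (E : V → V → Prop) (a b : V) (p : List V) : Prop :=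
  List.Chain E a p ∧ (a :: p).getLast (List.cons_ne_nil a p) = b

/-- The product of the edge weights `Λ k l` over the consecutive edges of the
vertex sequence `a :: p`. -/
def pathWeight {V : Type*} (Λ : Matrix V V ℝ) (a : V) (p : List V) : ℝ :=
  (((a :: p).zip p).map (fun q => Λ q.1 q.2)).prod

section Aux
variable {V : Type*} [Fintype V] [DecidableEq V]

lemma pathWeight_nil (Λ : Matrix V V ℝ) (a : V) : pathWeight Λ a [] = 1 := by
  simp [pathWeight]

lemma pathWeight_cons (Λ : Matrix V V ℝ) (a c : V) (p : List V) :
    pathWeight Λ a (c :: p) = Λ a c * pathWeight Λ c p := by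
  simp [pathWeight, List.zip_cons_cons]

def pathsF : ℕ → V → V → Finset (List V)
  | 0, a, b => if a = b then {([] : List V)} else ∅
  | (k+1), _, b => Finset.univ.biUnion (fun c => (pathsF k c b).image (fun p => c :: p))

lemma mem_pathsF : ∀ (k : ℕ) (a b : V) (p : List V),
    p ∈ pathsF k a b ↔ p.length = k ∧ (a :: p).getLast (List.cons_ne_nil a p) = b := by
  intro k
  induction k with
  | zero =>
    intro a b p
    simp only [pathsF]
    split_ifs with h
    · subst h
      simp [List.length_eq_zero_iff]
      rintro rfl; simp
    · simp only [Finset.notMem_empty, false_iff, not_and, List.length_eq_zero_iff]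
      rintro rfl; simpa using h
  | succ k ih =>
    intro a b p
    simp only [pathsF, Finset.mem_biUnion, Finset.mem_image, Finset.mem_univ, true_and]
    constructor
    · rintro ⟨c, q, hq, rfl⟩
      rw [ih] at hq
      refine ⟨by simp [hq.1], ?_⟩
      rw [List.getLast_cons (List.cons_ne_nil c q)]
      exact hq.2
    · rintro ⟨hl, hb⟩
      match p with
      | [] => simp at hl
      | c :: q =>
        refine ⟨c, q, ?_, rfl⟩
        rw [ih]
        refine ⟨by simpa using hl, ?_⟩
        rw [List.getLast_cons (List.cons_ne_nil c q)] at hb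
        exact hb

lemma pow_apply_eq (Λ : Matrix V V ℝ) : ∀ (k : ℕ) (a b : V),
    (Λ ^ k) a b = ∑ p ∈ pathsF k a b, pathWeight Λ a p := by
  intro k
  induction k with
  | zero =>
    intro a b
    simp only [pow_zero, Matrix.one_apply, pathsF]
    split_ifs with h <;> simp [pathWeight_nil]
  | succ k ih =>
    intro a b
    rw [pow_succ', Matrix.mul_apply]
    simp only [pathsF]
    rw [Finset.sum_biUnion]
    · refine Finset.sum_congr rfl fun c _ => ?_
      rw [Finset.sum_image (fun x _ y _ h => by simpa using h)]
      rw [ih, Finset.mul_sum]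
      exact Finset.sum_congr rfl fun q _ => (pathWeight_cons Λ a c q).symm
    · intro c _ d _ hcd
      simp only [Function.onFun]
      rw [Finset.disjoint_left]
      rintro p hp hp'
      simp only [Finset.mem_image] at hp hp'
      obtain ⟨q, _, rfl⟩ := hp
      obtain ⟨q', _, h⟩ := hp'
      have : d = c := by
        have := congrArg (fun l => l.head?) h
        simpa using this
      exact hcd this.symm

lemma chain_transGen {E : V → V → Prop} : ∀ (p : List V) (a b : V),
    List.Chain E a p → b ∈ p → Relation.TransGen E a b := by
  intro p
  induction p with
  | nil => intro a b _ hb; simp at hb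
  | cons c q ih =>
    intro a b hc hb
    rw [List.Chain, List.chain_cons] at hc
    rcases List.mem_cons.mp hb with rfl | hb
    · exact Relation.TransGen.single hc.1
    · exact Relation.TransGen.head hc.1 (ih c b hc.2 hb)

lemma chain_nodup {E : V → V → Prop} (hacyc : ∀ i, ¬ Relation.TransGen E i i) :
    ∀ (p : List V) (a : V), List.Chain E a p → (a :: p).Nodup := by
  intro p
  induction p with
  | nil => intro a _; simp
  | cons c q ih =>
    intro a hc
    rw [List.Chain, List.chain_cons] at hc
    refine List.nodup_cons.mpr ⟨?_, ih c hc.2⟩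
    intro ha
    exact hacyc a (chain_transGen (c :: q) a a (List.chain_cons.mpr hc) ha)

lemma chain_length_lt {E : V → V → Prop} (hacyc : ∀ i, ¬ Relation.TransGen E i i)
    {p : List V} {a : V} (hc : List.Chain E a p) : p.length < Fintype.card V := by
  have := (chain_nodup hacyc p a hc).length_le_card
  simpa using this

lemma pathWeight_eq_zero {E : V → V → Prop} {Λ : Matrix V V ℝ}
    (hsupp : ∀ i j, ¬ E i j → Λ i j = 0) :
    ∀ (p : List V) (a : V), ¬ List.Chain E a p → pathWeight Λ a p = 0 := by
  intro p
  induction p with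
  | nil => intro a h; exact absurd List.Chain.nil h
  | cons c q ih =>
    intro a h
    rw [List.Chain, List.chain_cons] at h
    push_neg at h
    rw [pathWeight_cons]
    by_cases hE : E a c
    · rw [ih c (h hE), mul_zero]
    · rw [hsupp a c hE, zero_mul]

lemma pow_card_eq_zero {E : V → V → Prop} (hacyc : ∀ i, ¬ Relation.TransGen E i i)
    {Λ : Matrix V V ℝ} (hsupp : ∀ i j, ¬ E i j → Λ i j = 0) :
    Λ ^ Fintype.card V = 0 := by
  ext a b
  rw [pow_apply_eq]
  simp only [Matrix.zero_apply]
  refine Finset.sum_eq_zero fun p hp => ?_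
  rw [mem_pathsF] at hp
  by_cases hc : List.Chain E a p
  · exact absurd hp.1 (Nat.ne_of_lt (chain_length_lt hacyc hc))
  · exact pathWeight_eq_zero hsupp p a hc

lemma inv_one_sub_eq {E : V → V → Prop} (hacyc : ∀ i, ¬ Relation.TransGen E i i)
    {Λ : Matrix V V ℝ} (hsupp : ∀ i j, ¬ E i j → Λ i j = 0) :
    (1 - Λ)⁻¹ = ∑ k ∈ Finset.range (Fintype.card V), Λ ^ k := by
  refine Matrix.inv_eq_right_inv ?_
  rw [mul_neg_geom_sum, pow_card_eq_zero hacyc hsupp, sub_zero]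

def allPathsF (a b : V) : Finset (List V) :=
  (Finset.range (Fintype.card V)).biUnion (fun k => pathsF k a b)

lemma inv_apply_eq {E : V → V → Prop} (hacyc : ∀ i, ¬ Relation.TransGen E i i)
    {Λ : Matrix V V ℝ} (hsupp : ∀ i j, ¬ E i j → Λ i j = 0) (a b : V) :
    (1 - Λ)⁻¹ a b = ∑ p ∈ allPathsF a b, pathWeight Λ a p := by
  rw [inv_one_sub_eq hacyc hsupp]
  rw [show (∑ k ∈ Finset.range (Fintype.card V), Λ ^ k) a b
      = ∑ k ∈ Finset.range (Fintype.card V), (Λ ^ k) a b from by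
    rw [Matrix.sum_apply]]
  rw [allPathsF, Finset.sum_biUnion]
  · exact Finset.sum_congr rfl fun k _ => pow_apply_eq Λ k a b
  · intro k _ l _ hkl
    simp only [Function.onFun]
    rw [Finset.disjoint_left]
    intro p hp hp'
    rw [mem_pathsF] at hp hp'
    exact hkl (hp.1.symm.trans hp'.1)

lemma mem_allPathsF {a b : V} {p : List V} :
    p ∈ allPathsF a b ↔ p.length < Fintype.card V ∧
      (a :: p).getLast (List.cons_ne_nil a p) = b := by
  simp only [allPathsF, Finset.mem_biUnion, Finset.mem_range, mem_pathsF]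
  constructor
  · rintro ⟨k, hk, rfl, h⟩; exact ⟨hk, h⟩
  · rintro ⟨hk, h⟩; exact ⟨p.length, hk, rfl, h⟩

end Aux

/-- Trek rule: for a DAG `G`, `Λ ∈ ℝ^E` and positive `ω`, the entry
`Σ i j` of `Σ = (I-Λ)^{-T} diag(ω) (I-Λ)^{-1}` is the sum over all treks between `i`
and `j` of the trek monomial `ω_{i₀} ∏_{k→l ∈ τ} λ_{kl}`.  A trek between `i` and `j`
is encoded as a triple `(i₀, pL, pR)` of a top node `i₀` together with a directed path
`pL` from `i₀` to `i` (the left side) and a directed path `pR` from `i₀` to `j`. -/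
theorem stmt2 {V : Type*} [Fintype V] [DecidableEq V]
    (E : V → V → Prop) (hacyc : ∀ i, ¬ Relation.TransGen E i i)
    (Λ : Matrix V V ℝ) (hsupp : ∀ i j, ¬ E i j → Λ i j = 0)
    (ω : V → ℝ) (hω : ∀ k, 0 < ω k)
    (Cov : Matrix V V ℝ)
    (hCov : Cov = ((1 - Λ)ᵀ)⁻¹ * Matrix.diagonal ω * (1 - Λ)⁻¹) :
    ∀ i j : V, Cov i j =
      ∑ᶠ t ∈ {t : V × List V × List V |
          IsDirPath E t.1 i t.2.1 ∧ IsDirPath E t.1 j t.2.2},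
        ω t.1 * pathWeight Λ t.1 t.2.1 * pathWeight Λ t.1 t.2.2 := by
  intro i j
  classical
  -- additional path lemma
  have dirPath_iff : ∀ (a b : V) (p : List V), pathWeight Λ a p ≠ 0 →
      (IsDirPath E a b p ↔ p ∈ allPathsF a b) := by
    intro a b p hw
    constructor
    · intro h
      exact mem_allPathsF.mpr ⟨chain_length_lt hacyc h.1, h.2⟩
    · intro h
      obtain ⟨_, hlast⟩ := mem_allPathsF.mp h
      refine ⟨?_, hlast⟩
      by_contra hc
      exact hw (pathWeight_eq_zero hsupp p a hc)
  set TS : Finset (V × List V × List V) :=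
    Finset.univ.biUnion
      (fun c => ((allPathsF c i) ×ˢ (allPathsF c j)).image (fun q => (c, q))) with hTS
  have mem_TS : ∀ t : V × List V × List V,
      t ∈ TS ↔ t.2.1 ∈ allPathsF t.1 i ∧ t.2.2 ∈ allPathsF t.1 j := by
    rintro ⟨c, p, q⟩
    simp only [hTS, Finset.mem_biUnion, Finset.mem_image, Finset.mem_univ, true_and,
      Finset.mem_product, Prod.ext_iff]
    constructor
    · rintro ⟨c', ⟨p', q'⟩, ⟨h1, h2⟩, rfl, rfl, rfl⟩
      exact ⟨h1, h2⟩
    · rintro ⟨h1, h2⟩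
      exact ⟨c, ⟨p, q⟩, ⟨h1, h2⟩, rfl, rfl, rfl⟩
  -- finsum equals finset sum over TS
  have hfin : ∑ᶠ t ∈ {t : V × List V × List V |
          IsDirPath E t.1 i t.2.1 ∧ IsDirPath E t.1 j t.2.2},
        ω t.1 * pathWeight Λ t.1 t.2.1 * pathWeight Λ t.1 t.2.2 =
      ∑ t ∈ TS, ω t.1 * pathWeight Λ t.1 t.2.1 * pathWeight Λ t.1 t.2.2 := by
    refine finsum_mem_eq_sum_of_inter_support_eq _ ?_
    ext t
    simp only [Set.mem_inter_iff, Set.mem_setOf_eq, Function.mem_support, Finset.coe_sort_coe,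
      Finset.mem_coe, ne_eq]
    constructor
    · rintro ⟨⟨h1, h2⟩, hne⟩
      have hp : pathWeight Λ t.1 t.2.1 ≠ 0 := fun h => hne (by rw [h]; ring)
      have hq : pathWeight Λ t.1 t.2.2 ≠ 0 := fun h => hne (by rw [h]; ring)
      exact ⟨(mem_TS t).mpr ⟨(dirPath_iff _ _ _ hp).mp h1, (dirPath_iff _ _ _ hq).mp h2⟩, hne⟩
    · rintro ⟨ht, hne⟩
      have hp : pathWeight Λ t.1 t.2.1 ≠ 0 := fun h => hne (by rw [h]; ring)
      have hq : pathWeight Λ t.1 t.2.2 ≠ 0 := fun h => hne (by rw [h]; ring)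
      obtain ⟨h1, h2⟩ := (mem_TS t).mp ht
      exact ⟨⟨(dirPath_iff _ _ _ hp).mpr h1, (dirPath_iff _ _ _ hq).mpr h2⟩, hne⟩
  rw [hfin, hTS, Finset.sum_biUnion ?disj]
  case disj =>
    intro c _ d _ hcd
    simp only [Function.onFun]
    rw [Finset.disjoint_left]
    rintro t ht ht'
    simp only [Finset.mem_image] at ht ht'
    obtain ⟨q, _, rfl⟩ := ht
    obtain ⟨q', _, h⟩ := ht'
    exact hcd (congrArg Prod.fst h).symm
  -- left hand side
  have hcov : Cov i j = ∑ c, (1 - Λ)⁻¹ c i * ω c * (1 - Λ)⁻¹ c j := by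
    rw [hCov, ← Matrix.transpose_nonsing_inv, Matrix.mul_apply]
    refine Finset.sum_congr rfl fun c _ => ?_
    rw [Matrix.mul_diagonal, Matrix.transpose_apply]
  rw [hcov]
  refine Finset.sum_congr rfl fun c _ => ?_
  rw [Finset.sum_image (fun x _ y _ h => by simpa using h)]
  rw [Finset.sum_product]
  rw [inv_apply_eq hacyc hsupp, inv_apply_eq hacyc hsupp,
    Finset.sum_mul, Finset.sum_mul]
  refine Finset.sum_congr rfl fun p _ => ?_
  rw [Finset.mul_sum]
  refine Finset.sum_congr rfl fun q _ => ?_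
  ring
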